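/- arXiv:2008.13042 — 2 statements merged into one kernel-verified Lean document; each statement's English description precedes it below -/
import Mathlib

section
/- For k ≥ 2, the integral IL = ∫_{-∞}^{∞} exp{½ [vec(R₀)' Σ₀^{-1/2} N_{Σ₀^{-1/2}(a_Δ⊗I_k)} Σ₀^{-1/2} vec(R₀) − t't]} · det[(a_Δ'⊗I_k)Σ₀^{-1}(a_Δ⊗I_k)]^{-1/2} · |Δ|^{k-2} dΔ is finite for every fixed R₀ ∈ ℝ^{k×2}, t ∈ ℝᵏ, and positive definite 2k×2k matrix Σ₀. -/
open Matrix Kronecker MeasureTheory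

/-- Orthogonal projection onto the column space of a full-column-rank matrix. -/
noncomputable def projMat {m n : Type*} [Fintype m] [Fintype n] [DecidableEq n]
    (A : Matrix m n ℝ) : Matrix m m ℝ :=
  A * (Aᵀ * A)⁻¹ * Aᵀ

/-- `vec` of a `k×2` matrix, stacking columns. -/
def vecCol {k : ℕ} (r : Matrix (Fin k) (Fin 2) ℝ) : Fin 2 × Fin k → ℝ :=
  fun p => r p.2 p.1

/-- `a_Δ ⊗ I_k`, where `a_Δ = (Δ,1)'`. -/
def aKron (k : ℕ) (Δ : ℝ) : Matrix (Fin 2 × Fin k) (Fin 1 × Fin k) ℝ :=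
  (of ![![Δ], ![1]] : Matrix (Fin 2) (Fin 1) ℝ) ⊗ₖ (1 : Matrix (Fin k) (Fin k) ℝ)

/- ### Auxiliary lemmas -/

lemma dot_self_nonneg' {n : Type*} [Fintype n] (x : n → ℝ) : 0 ≤ x ⬝ᵥ x :=
  Finset.sum_nonneg fun _ _ => mul_self_nonneg _

lemma dot_transpose_mulVec {m n : Type*} [Fintype m] [Fintype n]
    (M : Matrix m n ℝ) (x : n → ℝ) (z : m → ℝ) :
    x ⬝ᵥ (Mᵀ *ᵥ z) = (M *ᵥ x) ⬝ᵥ z := by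
  rw [dotProduct_mulVec, vecMul_transpose]

lemma mulVec_sq_le {n m : Type*} [Fintype n] [Fintype m] (M : Matrix n m ℝ) (x : m → ℝ) :
    (M *ᵥ x) ⬝ᵥ (M *ᵥ x) ≤ (∑ i, ∑ j, (M i j)^2) * (x ⬝ᵥ x) := by
  have h : ∀ i, (M *ᵥ x) i * (M *ᵥ x) i ≤ (∑ j, (M i j)^2) * (x ⬝ᵥ x) := by
    intro i
    have := Finset.sum_mul_sq_le_sq_mul_sq Finset.univ (fun j => M i j) x
    simpa [mulVec, dotProduct, ← sq] using this
  calc (M *ᵥ x) ⬝ᵥ (M *ᵥ x) ≤ ∑ i, (∑ j, (M i j)^2) * (x ⬝ᵥ x) :=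
        Finset.sum_le_sum fun i _ => h i
    _ = (∑ i, ∑ j, (M i j)^2) * (x ⬝ᵥ x) := by rw [Finset.sum_mul]

lemma det_ge_of_quad {n : Type*} [Fintype n] [DecidableEq n] {M : Matrix n n ℝ}
    (hM : M.IsHermitian) {c : ℝ} (hc : 0 ≤ c)
    (h : ∀ x : n → ℝ, c * (x ⬝ᵥ x) ≤ x ⬝ᵥ (M *ᵥ x)) :
    c ^ (Fintype.card n) ≤ M.det := by
  rw [hM.det_eq_prod_eigenvalues]
  have key : ∀ i, c ≤ hM.eigenvalues i := by
    intro i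
    set b : n → ℝ := ⇑(hM.eigenvectorBasis i) with hb
    have hnorm : ‖hM.eigenvectorBasis i‖ = 1 := hM.eigenvectorBasis.orthonormal.1 i
    have hbb : b ⬝ᵥ b = 1 := by
      have h1 : (inner ℝ (hM.eigenvectorBasis i) (hM.eigenvectorBasis i) : ℝ) = 1 := by
        rw [real_inner_self_eq_norm_sq, hnorm]; norm_num
      rw [← h1]
      simp [dotProduct, EuclideanSpace.inner_eq_star_dotProduct, dotProduct, hb]
      rw [← h1, PiLp.inner_apply]; simp [sq]
    have h2 : hM.eigenvalues i = b ⬝ᵥ (M *ᵥ b) := by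
      simpa [hb] using hM.eigenvalues_eq i
    have h3 := h b
    rw [hbb, mul_one] at h3
    rw [h2]; exact h3
  calc (c : ℝ) ^ Fintype.card n = ∏ _i : n, c := by
        rw [Finset.prod_const, Finset.card_univ]
    _ ≤ ∏ i, hM.eigenvalues i := Finset.prod_le_prod (fun _ _ => hc) (fun i _ => key i)

lemma proj_quad_le {m n : Type*} [Fintype m] [Fintype n] [DecidableEq n]
    (B : Matrix m n ℝ) (h : IsUnit (Bᵀ * B).det) (v : m → ℝ) :
    v ⬝ᵥ (projMat B *ᵥ v) ≤ v ⬝ᵥ v := by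
  set N := projMat B with hN
  have hNsym : Nᵀ = N := by
    rw [hN]
    unfold projMat
    rw [transpose_mul, transpose_mul, transpose_transpose, transpose_nonsing_inv,
      transpose_mul, transpose_transpose, Matrix.mul_assoc]
  have hNN : N * N = N := by
    rw [hN]
    unfold projMat
    have h1 : (Bᵀ * B)⁻¹ * (Bᵀ * B) = 1 := Matrix.nonsing_inv_mul _ h
    calc B * (Bᵀ * B)⁻¹ * Bᵀ * (B * (Bᵀ * B)⁻¹ * Bᵀ)
        = B * ((Bᵀ * B)⁻¹ * (Bᵀ * B)) * ((Bᵀ * B)⁻¹ * Bᵀ) := by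
          simp only [Matrix.mul_assoc]
      _ = B * (Bᵀ * B)⁻¹ * Bᵀ := by rw [h1]; simp only [Matrix.mul_one, Matrix.mul_assoc]
  set w := N *ᵥ v with hw
  have hww : w ⬝ᵥ w = v ⬝ᵥ w := by
    rw [hw, dotProduct_mulVec (N *ᵥ v) N v]
    have h1 : (N *ᵥ v) ᵥ* N = N *ᵥ (N *ᵥ v) := by
      rw [← hNsym, vecMul_transpose, hNsym]
    rw [h1, mulVec_mulVec, hNN, dotProduct_comm]
  have h0 : 0 ≤ (v - w) ⬝ᵥ (v - w) := Finset.sum_nonneg fun _ _ => mul_self_nonneg _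
  have hexp : (v - w) ⬝ᵥ (v - w) = v ⬝ᵥ v - v ⬝ᵥ w := by
    rw [sub_dotProduct, dotProduct_sub, dotProduct_sub, hww, dotProduct_comm w v]
    ring
  rw [hexp] at h0
  linarith

lemma aKron_gram (k : ℕ) (Δ : ℝ) :
    (aKron k Δ)ᵀ * aKron k Δ = (1 + Δ^2) • (1 : Matrix (Fin 1 × Fin k) (Fin 1 × Fin k) ℝ) := by
  unfold aKron
  have ht : ((of ![![Δ], ![1]] : Matrix (Fin 2) (Fin 1) ℝ) ⊗ₖ
      (1 : Matrix (Fin k) (Fin k) ℝ))ᵀ =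
      (of ![![Δ], ![1]] : Matrix (Fin 2) (Fin 1) ℝ)ᵀ ⊗ₖ (1 : Matrix (Fin k) (Fin k) ℝ)ᵀ := by
    ext ⟨a,b⟩ ⟨c,d⟩
    simp only [kroneckerMap_apply, Matrix.transpose_apply, Matrix.one_apply, eq_comm]
  rw [ht, transpose_one, ← mul_kronecker_mul, Matrix.one_mul]
  have ha : (of ![![Δ], ![1]] : Matrix (Fin 2) (Fin 1) ℝ)ᵀ * (of ![![Δ], ![1]]) =
      (1 + Δ^2) • (1 : Matrix (Fin 1) (Fin 1) ℝ) := by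
    ext i j
    fin_cases i; fin_cases j
    simp [mul_apply, Fin.sum_univ_two, Matrix.vecHead, Matrix.transpose_apply]
    ring
  rw [ha, smul_kronecker, one_kronecker_one]

lemma aKron_continuous (k : ℕ) : Continuous (fun Δ : ℝ => aKron k Δ) := by
  apply continuous_matrix
  rintro ⟨i1, i2⟩ ⟨j1, j2⟩
  unfold aKron
  fin_cases i1 <;>
    simp [kroneckerMap_apply] <;>
    fun_prop

/-- For `k ≥ 2`, the integrand of the `IL` statistic is integrable over `Δ ∈ ℝ`:
the integral
`∫ exp{½[vec(R₀)'Σ₀^{-1/2} N_{Σ₀^{-1/2}(a_Δ⊗I_k)} Σ₀^{-1/2} vec(R₀) − t't]}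
  · det[(a_Δ'⊗I_k)Σ₀⁻¹(a_Δ⊗I_k)]^{-1/2} · |Δ|^{k-2} dΔ` is finite. -/
theorem IL_integrable (k : ℕ) (hk : 2 ≤ k)
    (R₀ : Matrix (Fin k) (Fin 2) ℝ) (t : Fin k → ℝ)
    (Sig ShInv : Matrix (Fin 2 × Fin k) (Fin 2 × Fin k) ℝ)
    (hSig : Sig.PosDef) (hShSym : ShInv.IsSymm) (hShInv : ShInv * ShInv = Sig⁻¹) :
    Integrable (fun Δ : ℝ =>
      Real.exp ((1/2) * (((ShInv *ᵥ vecCol R₀) ⬝ᵥ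
          (projMat (ShInv * aKron k Δ) *ᵥ (ShInv *ᵥ vecCol R₀))) - t ⬝ᵥ t))
      * ((aKron k Δ)ᵀ * Sig⁻¹ * aKron k Δ).det ^ (-(1/2) : ℝ)
      * |Δ| ^ (k - 2)) := by
  have hShSym' : ShInvᵀ = ShInv := hShSym
  set v : Fin 2 × Fin k → ℝ := ShInv *ᵥ vecCol R₀ with hv
  set G : ℝ → Matrix (Fin 1 × Fin k) (Fin 1 × Fin k) ℝ :=
    fun Δ => (aKron k Δ)ᵀ * Sig⁻¹ * aKron k Δ with hG
  -- ShInv is invertible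
  have hSdet : ShInv.det ≠ 0 := by
    intro h0
    have h1 : ShInv.det * ShInv.det = (Sig⁻¹).det := by rw [← det_mul, hShInv]
    have h2 : (Sig⁻¹).det = Ring.inverse Sig.det := Matrix.det_nonsing_inv Sig
    rw [h0, mul_zero] at h1
    have h3 : IsUnit Sig.det := isUnit_iff_ne_zero.2 hSig.det_pos.ne'
    rw [h2, Ring.inverse_eq_inv'] at h1
    exact hSig.det_pos.ne' (inv_eq_zero.mp h1.symm)
  -- the constant K and c
  set K : ℝ := (∑ i, ∑ j, ((ShInv⁻¹) i j)^2) + 1 with hK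
  have hKpos : 0 < K := by
    have : 0 ≤ ∑ i, ∑ j, ((ShInv⁻¹) i j)^2 :=
      Finset.sum_nonneg fun _ _ => Finset.sum_nonneg fun _ _ => sq_nonneg _
    rw [hK]; linarith
  set c : ℝ := K⁻¹ with hc
  have hcpos : 0 < c := inv_pos.2 hKpos
  -- norm comparison
  have hxle : ∀ y : Fin 2 × Fin k → ℝ, y ⬝ᵥ y ≤ K * ((ShInv *ᵥ y) ⬝ᵥ (ShInv *ᵥ y)) := by
    intro y
    have h1 := mulVec_sq_le ShInv⁻¹ (ShInv *ᵥ y)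
    have h2 : ShInv⁻¹ *ᵥ (ShInv *ᵥ y) = y := by
      rw [mulVec_mulVec, Matrix.nonsing_inv_mul _ (isUnit_iff_ne_zero.2 hSdet), one_mulVec]
    rw [h2] at h1
    have h3 : 0 ≤ (ShInv *ᵥ y) ⬝ᵥ (ShInv *ᵥ y) := dot_self_nonneg' _
    calc y ⬝ᵥ y ≤ (∑ i, ∑ j, ((ShInv⁻¹) i j)^2) * ((ShInv *ᵥ y) ⬝ᵥ (ShInv *ᵥ y)) := h1
      _ ≤ K * ((ShInv *ᵥ y) ⬝ᵥ (ShInv *ᵥ y)) := by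
          apply mul_le_mul_of_nonneg_right _ h3
          rw [hK]; linarith
  -- quadratic form of G
  have hGval : ∀ (Δ : ℝ) (x : Fin 1 × Fin k → ℝ),
      x ⬝ᵥ (G Δ *ᵥ x) =
        (ShInv *ᵥ (aKron k Δ *ᵥ x)) ⬝ᵥ (ShInv *ᵥ (aKron k Δ *ᵥ x)) := by
    intro Δ x
    rw [hG]
    simp only [← hShInv, Matrix.mul_assoc]
    rw [← mulVec_mulVec, dot_transpose_mulVec, ← mulVec_mulVec, ← mulVec_mulVec,
      dotProduct_mulVec, ← hShSym', vecMul_transpose, hShSym']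
  -- gram of aKron
  have hgram : ∀ (Δ : ℝ) (x : Fin 1 × Fin k → ℝ),
      (aKron k Δ *ᵥ x) ⬝ᵥ (aKron k Δ *ᵥ x) = (1 + Δ^2) * (x ⬝ᵥ x) := by
    intro Δ x
    have h1 : (aKron k Δ *ᵥ x) ⬝ᵥ (aKron k Δ *ᵥ x)
        = x ⬝ᵥ (((aKron k Δ)ᵀ * aKron k Δ) *ᵥ x) := by
      rw [← mulVec_mulVec, dot_transpose_mulVec]
    rw [h1, aKron_gram, smul_mulVec, one_mulVec, dotProduct_smul, smul_eq_mul]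
  -- quadratic lower bound
  have hGquad : ∀ (Δ : ℝ) (x : Fin 1 × Fin k → ℝ),
      (c * (1 + Δ^2)) * (x ⬝ᵥ x) ≤ x ⬝ᵥ (G Δ *ᵥ x) := by
    intro Δ x
    rw [hGval]
    have h1 := hxle (aKron k Δ *ᵥ x)
    rw [hgram] at h1
    calc (c * (1 + Δ^2)) * (x ⬝ᵥ x) = c * ((1 + Δ^2) * (x ⬝ᵥ x)) := by ring
      _ ≤ c * (K * ((ShInv *ᵥ (aKron k Δ *ᵥ x)) ⬝ᵥ (ShInv *ᵥ (aKron k Δ *ᵥ x)))) :=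
          mul_le_mul_of_nonneg_left h1 hcpos.le
      _ = (ShInv *ᵥ (aKron k Δ *ᵥ x)) ⬝ᵥ (ShInv *ᵥ (aKron k Δ *ᵥ x)) := by
          rw [hc]; field_simp
  -- G is hermitian
  have hSinvH : (Sig⁻¹).IsHermitian := (hSig.posSemidef.inv).isHermitian
  have hGherm : ∀ Δ : ℝ, (G Δ).IsHermitian := by
    intro Δ
    have h1 := isHermitian_conjTranspose_mul_mul (aKron k Δ) hSinvH
    rwa [conjTranspose_eq_transpose_of_trivial] at h1
  -- determinant lower bound
  have hcard : Fintype.card (Fin 1 × Fin k) = k := by simp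
  have hy : ∀ Δ : ℝ, (0:ℝ) < 1 + Δ^2 := fun Δ => by positivity
  have hdet : ∀ Δ : ℝ, (c * (1 + Δ^2))^k ≤ (G Δ).det := by
    intro Δ
    have h1 := det_ge_of_quad (hGherm Δ) (c := c * (1+Δ^2)) (by positivity) (hGquad Δ)
    rwa [hcard] at h1
  have hdetpos : ∀ Δ : ℝ, 0 < (G Δ).det := fun Δ =>
    lt_of_lt_of_le (pow_pos (mul_pos hcpos (hy Δ)) k) (hdet Δ)
  -- Bᵀ B = G
  have hBtB : ∀ Δ : ℝ, (ShInv * aKron k Δ)ᵀ * (ShInv * aKron k Δ) = G Δ := by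
    intro Δ
    rw [transpose_mul, hShSym', hG]
    simp only [← hShInv, Matrix.mul_assoc]
  -- projection bound
  have hproj_le : ∀ Δ : ℝ, v ⬝ᵥ (projMat (ShInv * aKron k Δ) *ᵥ v) ≤ v ⬝ᵥ v := by
    intro Δ
    apply proj_quad_le
    rw [hBtB]
    exact isUnit_iff_ne_zero.2 (hdetpos Δ).ne'
  -- continuity
  have hA := aKron_continuous k
  have hGc : Continuous G :=
    ((hA.matrix_transpose).matrix_mul continuous_const).matrix_mul hA
  have hdetc : Continuous fun Δ => (G Δ).det := hGc.matrix_det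
  have hGinvc : Continuous fun Δ => (G Δ)⁻¹ := by
    have he : (fun Δ => (G Δ)⁻¹) = fun Δ => ((G Δ).det)⁻¹ • (G Δ).adjugate := by
      funext Δ
      rw [Matrix.inv_def, Ring.inverse_eq_inv']
    rw [he]
    exact (hdetc.inv₀ fun Δ => (hdetpos Δ).ne').smul hGc.matrix_adjugate
  have hBc : Continuous fun Δ => ShInv * aKron k Δ := continuous_const.matrix_mul hA
  have hprojc : Continuous fun Δ => projMat (ShInv * aKron k Δ) := by
    have he : (fun Δ => projMat (ShInv * aKron k Δ)) =
        fun Δ => (ShInv * aKron k Δ) * (G Δ)⁻¹ * (ShInv * aKron k Δ)ᵀ := by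
      funext Δ
      unfold projMat
      rw [hBtB]
    rw [he]
    exact (hBc.matrix_mul hGinvc).matrix_mul hBc.matrix_transpose
  have hfc : Continuous (fun Δ : ℝ =>
      Real.exp ((1/2) * ((v ⬝ᵥ (projMat (ShInv * aKron k Δ) *ᵥ v)) - t ⬝ᵥ t))
      * ((G Δ).det) ^ (-(1/2) : ℝ) * |Δ| ^ (k - 2)) := by
    have h1 : Continuous fun Δ : ℝ =>
        (1/2) * ((v ⬝ᵥ (projMat (ShInv * aKron k Δ) *ᵥ v)) - t ⬝ᵥ t) :=
      continuous_const.mul ((continuous_const.dotProduct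
        (hprojc.matrix_mulVec continuous_const)).sub continuous_const)
    exact ((Real.continuous_exp.comp h1).mul
      (hdetc.rpow_const fun Δ => Or.inl (hdetpos Δ).ne')).mul (continuous_abs.pow _)
  -- final bound
  set E : ℝ := Real.exp ((1/2) * (v ⬝ᵥ v - t ⬝ᵥ t)) with hE
  set C : ℝ := E * (c ^ k) ^ (-(1/2) : ℝ) with hC
  apply Integrable.mono' ((integrable_inv_one_add_sq).const_mul C) hfc.aestronglyMeasurable
  filter_upwards with Δ
  have hy0 : (0:ℝ) < 1 + Δ^2 := hy Δ
  have hnn : 0 ≤ Real.exp ((1/2) * ((v ⬝ᵥ (projMat (ShInv * aKron k Δ) *ᵥ v)) - t ⬝ᵥ t))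
      * ((G Δ).det) ^ (-(1/2) : ℝ) * |Δ| ^ (k - 2) :=
    mul_nonneg (mul_nonneg (Real.exp_pos _).le (Real.rpow_nonneg (hdetpos Δ).le _))
      (pow_nonneg (abs_nonneg _) _)
  rw [Real.norm_eq_abs, abs_of_nonneg hnn]
  have hexp_le : Real.exp ((1/2) * ((v ⬝ᵥ (projMat (ShInv * aKron k Δ) *ᵥ v)) - t ⬝ᵥ t))
      ≤ E := by
    rw [hE]
    apply Real.exp_le_exp.2
    have h1 := hproj_le Δ
    linarith
  have hdet_le : ((G Δ).det) ^ (-(1/2):ℝ)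
      ≤ (c^k) ^ (-(1/2):ℝ) * (1 + Δ^2) ^ (-(k:ℝ)/2) := by
    have h1 : ((G Δ).det) ^ (-(1/2):ℝ) ≤ ((c*(1 + Δ^2))^k) ^ (-(1/2):ℝ) :=
      Real.rpow_le_rpow_of_nonpos (pow_pos (mul_pos hcpos hy0) k) (hdet Δ) (by norm_num)
    have h2 : ((c*(1 + Δ^2))^k : ℝ) = c^k * (1 + Δ^2)^k := mul_pow c _ k
    have h3 : ((c^k * (1 + Δ^2)^k : ℝ)) ^ (-(1/2):ℝ)
        = (c^k)^(-(1/2):ℝ) * ((1 + Δ^2)^k)^(-(1/2):ℝ) :=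
      Real.mul_rpow (pow_nonneg hcpos.le k) (pow_nonneg hy0.le k)
    have h4 : (((1 + Δ^2)^k : ℝ)) ^ (-(1/2):ℝ) = (1 + Δ^2) ^ (-(k:ℝ)/2) := by
      rw [← Real.rpow_natCast (1 + Δ^2) k, ← Real.rpow_mul hy0.le]
      congr 1
      ring
    calc ((G Δ).det) ^ (-(1/2):ℝ) ≤ ((c*(1 + Δ^2))^k) ^ (-(1/2):ℝ) := h1
      _ = (c^k) ^ (-(1/2):ℝ) * (1 + Δ^2) ^ (-(k:ℝ)/2) := by rw [h2, h3, h4]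
  have habs_le : (|Δ|:ℝ) ^ (k-2) ≤ (1 + Δ^2) ^ (((k:ℝ)-2)/2) := by
    have h1 : |Δ| ≤ (1 + Δ^2) ^ ((1:ℝ)/2) := by
      rw [← Real.sqrt_eq_rpow, ← Real.sqrt_sq_eq_abs]
      exact Real.sqrt_le_sqrt (by linarith)
    calc |Δ| ^ (k-2) ≤ ((1 + Δ^2) ^ ((1:ℝ)/2)) ^ (k-2) :=
          pow_le_pow_left₀ (abs_nonneg _) h1 _
      _ = (1 + Δ^2) ^ (((k:ℝ)-2)/2) := by
          rw [← Real.rpow_natCast ((1 + Δ^2) ^ ((1:ℝ)/2)) (k-2), ← Real.rpow_mul hy0.le]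
          congr 1
          rw [Nat.cast_sub hk]
          push_cast
          ring
  have h5 : (1 + Δ^2:ℝ) ^ (-(k:ℝ)/2) * (1 + Δ^2) ^ (((k:ℝ)-2)/2) = (1 + Δ^2)⁻¹ := by
    rw [← Real.rpow_add hy0]
    have he2 : -(k:ℝ)/2 + ((k:ℝ)-2)/2 = -1 := by ring
    rw [he2, Real.rpow_neg_one]
  calc Real.exp ((1/2) * ((v ⬝ᵥ (projMat (ShInv * aKron k Δ) *ᵥ v)) - t ⬝ᵥ t))
      * ((G Δ).det) ^ (-(1/2) : ℝ) * |Δ| ^ (k - 2)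
      ≤ E * ((c^k) ^ (-(1/2):ℝ) * (1 + Δ^2) ^ (-(k:ℝ)/2)) * (1 + Δ^2) ^ (((k:ℝ)-2)/2) := by
        exact mul_le_mul
          (mul_le_mul hexp_le hdet_le (Real.rpow_nonneg (hdetpos Δ).le _) (Real.exp_pos _).le)
          habs_le (pow_nonneg (abs_nonneg _) _)
          (mul_nonneg (Real.exp_pos _).le (mul_nonneg
            (Real.rpow_nonneg (pow_nonneg hcpos.le k) _) (Real.rpow_nonneg hy0.le _)))
      _ = C * (1 + Δ^2)⁻¹ := by
        rw [hC, ← h5]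
        ring
end

section
/- The LR statistic LR = max_a vec(R)'Σ^{-1/2} N_{Σ^{-1/2}(a⊗I_k)} Σ^{-1/2} vec(R) − T'T, with maximization over a = (β,1)', β ∈ ℝ, equals b₀'R'[(b₀'⊗I_k)Σ(b₀⊗I_k)]^{-1}Rb₀ − min_b b'R'[(b'⊗I_k)Σ(b⊗I_k)]^{-1}Rb, where the minimum is over b = (1,−β)', β ∈ ℝ, and b₀ = (1,−β₀)'. -/
open Matrix Kronecker MeasureTheory

/-- `a ⊗ I_k` for a 2-vector `a`, as a `2k × k` matrix. -/
def colKron (k : ℕ) (a : Fin 2 → ℝ) : Matrix (Fin 2 × Fin k) (Fin k) ℝ :=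
  Matrix.of fun p i => a p.1 * (1 : Matrix (Fin k) (Fin k) ℝ) p.2 i

/-- `c' ⊗ I_k` for a 2-vector `c`, as a `k × 2k` matrix. -/
def rowKron (k : ℕ) (c : Fin 2 → ℝ) : Matrix (Fin k) (Fin 2 × Fin k) ℝ :=
  Matrix.of fun i p => c p.1 * (1 : Matrix (Fin k) (Fin k) ℝ) p.2 i


namespace LRaux
open Matrix

variable {N n : Type*} [Fintype N] [DecidableEq N] [Fintype n] [DecidableEq n]

lemma quad_helper (M : Matrix N n ℝ) (P : Matrix n n ℝ) (v : N → ℝ) :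
    (Mᵀ *ᵥ v) ⬝ᵥ (P *ᵥ (Mᵀ *ᵥ v)) = v ⬝ᵥ ((M * P * Mᵀ) *ᵥ v) := by
  rw [← Matrix.mulVec_mulVec, ← Matrix.mulVec_mulVec, Matrix.dotProduct_mulVec v M,
    ← Matrix.mulVec_transpose]

lemma transpose_eq {M : Matrix N N ℝ} (hM : M.IsHermitian) : Mᵀ = M := by
  rwa [Matrix.IsHermitian, Matrix.conjTranspose_eq_transpose_of_trivial] at hM

lemma posDef_conj {M : Matrix N N ℝ} (hM : M.PosDef) (A : Matrix N n ℝ)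
    (hA : ∀ x : n → ℝ, x ≠ 0 → A *ᵥ x ≠ 0) : (Aᵀ * M * A).PosDef := by
  refine Matrix.PosDef.of_dotProduct_mulVec_pos ?_ ?_
  · show (Aᵀ * M * A)ᴴ = _
    rw [Matrix.conjTranspose_eq_transpose_of_trivial]
    simp [Matrix.transpose_mul, Matrix.mul_assoc, transpose_eq hM.isHermitian]
  · intro x hx
    have h1 : star x = x := by simp
    rw [h1]
    have h2 : x ⬝ᵥ ((Aᵀ * M * A) *ᵥ x) = (A *ᵥ x) ⬝ᵥ (M *ᵥ (A *ᵥ x)) := by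
      rw [← Matrix.mulVec_mulVec, ← Matrix.mulVec_mulVec, Matrix.dotProduct_mulVec,
        Matrix.vecMul_transpose]
    rw [h2]
    have h3 := hM.dotProduct_mulVec_pos (hA x hx)
    simpa using h3

lemma star_identity {Sig : Matrix N N ℝ} (hSig : Sig.PosDef)
    (A B : Matrix N n ℝ) (c : ℝ) (hc : c ≠ 0)
    (hAB : Aᵀ * B = 0)
    (hAA : Aᵀ * A = c • 1) (hBB : Bᵀ * B = c • 1)
    (hres : A * Aᵀ + B * Bᵀ = c • (1 : Matrix N N ℝ)) :
    Sig⁻¹ = Sig⁻¹ * A * (Aᵀ * Sig⁻¹ * A)⁻¹ * (Aᵀ * Sig⁻¹)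
      + B * (Bᵀ * Sig * B)⁻¹ * Bᵀ := by
  have hSiPD : (Sig⁻¹).PosDef := hSig.inv
  have hSdet : IsUnit Sig.det := (Matrix.isUnit_iff_isUnit_det _).mp hSig.isUnit
  have hSiS : Sig⁻¹ * Sig = 1 := Matrix.nonsing_inv_mul _ hSdet
  have hSSi : Sig * Sig⁻¹ = 1 := Matrix.mul_nonsing_inv _ hSdet
  have hST : Sigᵀ = Sig := transpose_eq hSig.isHermitian
  have hSiT : (Sig⁻¹)ᵀ = Sig⁻¹ := transpose_eq hSiPD.isHermitian
  -- injectivity of A and B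
  have hAinj : ∀ x : n → ℝ, x ≠ 0 → A *ᵥ x ≠ 0 := by
    intro x hx h0
    apply hx
    have : Aᵀ *ᵥ (A *ᵥ x) = c • x := by
      rw [Matrix.mulVec_mulVec, hAA]; simp [Matrix.smul_mulVec]
    rw [h0, Matrix.mulVec_zero] at this
    exact (smul_eq_zero.mp this.symm).resolve_left hc
  have hBinj : ∀ x : n → ℝ, x ≠ 0 → B *ᵥ x ≠ 0 := by
    intro x hx h0
    apply hx
    have : Bᵀ *ᵥ (B *ᵥ x) = c • x := by
      rw [Matrix.mulVec_mulVec, hBB]; simp [Matrix.smul_mulVec]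
    rw [h0, Matrix.mulVec_zero] at this
    exact (smul_eq_zero.mp this.symm).resolve_left hc
  -- the two Gram matrices
  have hWPD : (Aᵀ * Sig⁻¹ * A).PosDef := posDef_conj hSiPD A hAinj
  have hVPD : (Bᵀ * Sig * B).PosDef := posDef_conj hSig B hBinj
  set W := (Aᵀ * Sig⁻¹ * A)⁻¹ with hWdef
  set V := (Bᵀ * Sig * B)⁻¹ with hVdef
  have hWdet : IsUnit (Aᵀ * Sig⁻¹ * A).det := (Matrix.isUnit_iff_isUnit_det _).mp hWPD.isUnit
  have hVdet : IsUnit (Bᵀ * Sig * B).det := (Matrix.isUnit_iff_isUnit_det _).mp hVPD.isUnit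
  have hW2 : W * (Aᵀ * (Sig⁻¹ * A)) = 1 := by
    rw [show Aᵀ * (Sig⁻¹ * A) = Aᵀ * Sig⁻¹ * A from (Matrix.mul_assoc _ _ _).symm]
    exact Matrix.nonsing_inv_mul _ hWdet
  have hV2 : V * (Bᵀ * (Sig * B)) = 1 := by
    rw [show Bᵀ * (Sig * B) = Bᵀ * Sig * B from (Matrix.mul_assoc _ _ _).symm]
    exact Matrix.nonsing_inv_mul _ hVdet
  have hVV : V * (Bᵀ * Sig * B) = 1 := Matrix.nonsing_inv_mul _ hVdet
  have hWT : Wᵀ = W := by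
    rw [hWdef, Matrix.transpose_nonsing_inv]
    congr 1
    simp [Matrix.transpose_mul, Matrix.mul_assoc, hSiT]
  have hVT : Vᵀ = V := by
    rw [hVdef, Matrix.transpose_nonsing_inv]
    congr 1
    simp [Matrix.transpose_mul, Matrix.mul_assoc, hST]
  have hBA : Bᵀ * A = 0 := by
    have := congrArg Matrix.transpose hAB
    simpa [Matrix.transpose_mul] using this
  set Z := Sig⁻¹ - Sig⁻¹ * A * W * (Aᵀ * Sig⁻¹) - B * V * Bᵀ with hZdef
  have hZA : Z * A = 0 := by
    have h1 : Sig⁻¹ * A * W * (Aᵀ * Sig⁻¹) * A = Sig⁻¹ * A := by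
      calc Sig⁻¹ * A * W * (Aᵀ * Sig⁻¹) * A
          = Sig⁻¹ * (A * (W * (Aᵀ * (Sig⁻¹ * A)))) := by simp [Matrix.mul_assoc]
        _ = Sig⁻¹ * A := by rw [hW2]; simp
    have h2 : B * V * Bᵀ * A = 0 := by
      rw [Matrix.mul_assoc, hBA]; simp
    rw [hZdef, Matrix.sub_mul, Matrix.sub_mul, h1, h2]
    simp
  have hZSB : Z * (Sig * B) = 0 := by
    have h1 : Sig⁻¹ * (Sig * B) = B := by rw [← Matrix.mul_assoc, hSiS, Matrix.one_mul]
    have h2 : Sig⁻¹ * A * W * (Aᵀ * Sig⁻¹) * (Sig * B) = 0 := by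
      calc Sig⁻¹ * A * W * (Aᵀ * Sig⁻¹) * (Sig * B)
          = Sig⁻¹ * (A * (W * (Aᵀ * (Sig⁻¹ * (Sig * B))))) := by simp [Matrix.mul_assoc]
        _ = Sig⁻¹ * (A * (W * (Aᵀ * B))) := by rw [h1]
        _ = 0 := by rw [hAB]; simp
    have h3 : B * V * Bᵀ * (Sig * B) = B := by
      calc B * V * Bᵀ * (Sig * B) = B * (V * (Bᵀ * (Sig * B))) := by simp [Matrix.mul_assoc]
        _ = B := by rw [hV2]; simp
    rw [hZdef, Matrix.sub_mul, Matrix.sub_mul, h1, h2, h3]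
    simp
  have hZT : Zᵀ = Z := by
    rw [hZdef]
    simp only [Matrix.transpose_sub, Matrix.transpose_mul, Matrix.transpose_transpose,
      hSiT, hWT, hVT]
    simp [Matrix.mul_assoc]
  have hAZ : Aᵀ * Z = 0 := by
    have := congrArg Matrix.transpose hZA
    simpa [Matrix.transpose_mul, hZT] using this
  have hBSZ : Bᵀ * (Sig * Z) = 0 := by
    have := congrArg Matrix.transpose hZSB
    simpa [Matrix.transpose_mul, hZT, hST, Matrix.mul_assoc] using this
  -- K := Z * B
  have hK : c • (Z * B) = B * (Bᵀ * (Z * B)) := by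
    have h0 : Aᵀ * (Z * B) = 0 := by rw [← Matrix.mul_assoc, hAZ, Matrix.zero_mul]
    calc c • (Z * B) = (c • (1 : Matrix N N ℝ)) * (Z * B) := by
          rw [Matrix.smul_mul, Matrix.one_mul]
      _ = (A * Aᵀ + B * Bᵀ) * (Z * B) := by rw [hres]
      _ = A * (Aᵀ * (Z * B)) + B * (Bᵀ * (Z * B)) := by
          rw [Matrix.add_mul, Matrix.mul_assoc, Matrix.mul_assoc]
      _ = B * (Bᵀ * (Z * B)) := by rw [h0]; simp
  have hBK : Bᵀ * (Z * B) = 0 := by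
    have h1 : Bᵀ * (Sig * (c • (Z * B))) = Bᵀ * (Sig * (B * (Bᵀ * (Z * B)))) := by rw [hK]
    have h2 : Bᵀ * (Sig * (c • (Z * B))) = 0 := by
      rw [Matrix.mul_smul, Matrix.mul_smul, ← Matrix.mul_assoc Sig Z B,
        ← Matrix.mul_assoc Bᵀ (Sig * Z) B, hBSZ]
      simp
    have h3 : (Bᵀ * Sig * B) * (Bᵀ * (Z * B)) = 0 := by
      calc (Bᵀ * Sig * B) * (Bᵀ * (Z * B))
          = Bᵀ * (Sig * (B * (Bᵀ * (Z * B)))) := by simp [Matrix.mul_assoc]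
        _ = Bᵀ * (Sig * (c • (Z * B))) := by rw [← hK]
        _ = 0 := h2
    have h4 := congrArg (fun M => V * M) h3
    simpa [← Matrix.mul_assoc, hVV] using h4
  have hKzero : Z * B = 0 := by
    have h5 : c • (Z * B) = 0 := by rw [hK, hBK, Matrix.mul_zero]
    exact (smul_eq_zero.mp h5).resolve_left hc
  have hBZ : Bᵀ * Z = 0 := by
    have := congrArg Matrix.transpose hKzero
    simpa [Matrix.transpose_mul, hZT] using this
  have hZzero : Z = 0 := by
    have h6 : c • Z = 0 := by
      calc c • Z = (c • (1 : Matrix N N ℝ)) * Z := by rw [Matrix.smul_mul, Matrix.one_mul]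
        _ = (A * Aᵀ + B * Bᵀ) * Z := by rw [hres]
        _ = A * (Aᵀ * Z) + B * (Bᵀ * Z) := by
            rw [Matrix.add_mul, Matrix.mul_assoc, Matrix.mul_assoc]
        _ = 0 := by rw [hAZ, hBZ]; simp
    exact (smul_eq_zero.mp h6).resolve_left hc
  have := hZzero
  rw [hZdef, sub_sub, sub_eq_zero] at this
  exact this

end LRaux

namespace LRaux
variable {k : ℕ}

lemma rowKron_eq (c : Fin 2 → ℝ) : rowKron k c = (colKron k c)ᵀ := by
  ext i p; simp [rowKron, colKron, Matrix.transpose_apply]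

lemma colKronT_mul (a b : Fin 2 → ℝ) :
    (colKron k a)ᵀ * colKron k b = (a ⬝ᵥ b) • (1 : Matrix (Fin k) (Fin k) ℝ) := by
  ext i j
  simp only [colKron, Matrix.mul_apply, Fintype.sum_prod_type, Matrix.one_apply,
    dotProduct, Matrix.transpose_apply, Matrix.smul_apply, Matrix.of_apply, smul_eq_mul]
  rcases eq_or_ne i j with h | h
  · simp [h]
  · simp [h, Ne.symm h]

lemma colKron_mulT_add (β : ℝ) :
    colKron k ![β,1] * (colKron k ![β,1])ᵀ + colKron k ![1,-β] * (colKron k ![1,-β])ᵀ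
      = (β^2+1) • (1 : Matrix (Fin 2 × Fin k) (Fin 2 × Fin k) ℝ) := by
  ext ⟨i, n⟩ ⟨j, m⟩
  simp only [colKron, Matrix.mul_apply, Matrix.one_apply, Prod.ext_iff, Matrix.add_apply,
    Matrix.transpose_apply, Matrix.smul_apply, Matrix.of_apply, smul_eq_mul]
  rcases eq_or_ne n m with h | h <;> fin_cases i <;> fin_cases j <;> simp [h] <;> ring

lemma hAB (β : ℝ) : (colKron k ![β,1])ᵀ * colKron k ![1,-β] = 0 := by
  rw [colKronT_mul]
  have : (![β,1] : Fin 2 → ℝ) ⬝ᵥ ![1,-β] = 0 := by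
    simp [dotProduct, Fin.sum_univ_two]
  rw [this, zero_smul]

lemma hAA (β : ℝ) : (colKron k ![β,1])ᵀ * colKron k ![β,1]
    = (β^2+1) • (1 : Matrix (Fin k) (Fin k) ℝ) := by
  rw [colKronT_mul]
  congr 1
  simp [dotProduct, Fin.sum_univ_two]; ring

lemma hBB (β : ℝ) : (colKron k ![1,-β])ᵀ * colKron k ![1,-β]
    = (β^2+1) • (1 : Matrix (Fin k) (Fin k) ℝ) := by
  rw [colKronT_mul]
  congr 1
  simp [dotProduct, Fin.sum_univ_two]; ring

lemma star_spec (β : ℝ) {Sig : Matrix (Fin 2 × Fin k) (Fin 2 × Fin k) ℝ} (hSig : Sig.PosDef) :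
    Sig⁻¹ = Sig⁻¹ * colKron k ![β,1]
        * ((colKron k ![β,1])ᵀ * Sig⁻¹ * colKron k ![β,1])⁻¹ * ((colKron k ![β,1])ᵀ * Sig⁻¹)
      + colKron k ![1,-β] * ((colKron k ![1,-β])ᵀ * Sig * colKron k ![1,-β])⁻¹
        * (colKron k ![1,-β])ᵀ :=
  star_identity hSig _ _ (β^2+1) (by positivity) (hAB β) (hAA β) (hBB β)
    (colKron_mulT_add β)

lemma B_inj (β : ℝ) : ∀ x : Fin k → ℝ, x ≠ 0 → colKron k ![1,-β] *ᵥ x ≠ 0 := by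
  intro x hx h0
  apply hx
  have : (colKron k ![1,-β])ᵀ *ᵥ (colKron k ![1,-β] *ᵥ x) = (β^2+1) • x := by
    rw [Matrix.mulVec_mulVec, hBB]; simp [Matrix.smul_mulVec]
  rw [h0, Matrix.mulVec_zero] at this
  exact (smul_eq_zero.mp this.symm).resolve_left (by positivity)

lemma BSB_posdef (β : ℝ) {Sig : Matrix (Fin 2 × Fin k) (Fin 2 × Fin k) ℝ} (hSig : Sig.PosDef) :
    ((colKron k ![1,-β])ᵀ * Sig * colKron k ![1,-β]).PosDef :=
  posDef_conj hSig _ (B_inj β)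

lemma quad_nonneg {n : Type*} [Fintype n] {M : Matrix n n ℝ} (hM : M.PosDef) (x : n → ℝ) :
    0 ≤ x ⬝ᵥ (M *ᵥ x) := by
  have := hM.posSemidef.dotProduct_mulVec_nonneg x
  simpa using this

end LRaux

namespace LRaux

lemma sup_sub (C : ℝ) (G : ℝ → ℝ) (hG0 : ∀ β, 0 ≤ G β) (β₀ : ℝ) :
    (⨆ β : ℝ, C - G β) - (C - G β₀) = G β₀ - ⨅ β : ℝ, G β := by
  have hbdd : BddBelow (Set.range G) := ⟨0, by rintro y ⟨β, rfl⟩; exact hG0 β⟩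
  have habove : BddAbove (Set.range fun β => C - G β) :=
    ⟨C, by rintro y ⟨β, rfl⟩; simpa using hG0 β⟩
  have hsup : (⨆ β : ℝ, C - G β) = C - ⨅ β : ℝ, G β := by
    apply le_antisymm
    · exact ciSup_le fun β => sub_le_sub_left (ciInf_le hbdd β) C
    · have h2 : ∀ β : ℝ, C - (⨆ b : ℝ, C - G b) ≤ G β := by
        intro β
        have := le_ciSup habove β
        linarith
      have h3 := le_ciInf h2
      linarith
  rw [hsup]; ring

end LRaux

/-- The `LR` statistic
`max_a vec(R)'Σ^{-1/2} N_{Σ^{-1/2}(a⊗I_k)} Σ^{-1/2} vec(R) − T'T` (over `a = (β,1)'`) equals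
`b₀'R'[(b₀'⊗I_k)Σ(b₀⊗I_k)]⁻¹Rb₀ − min_b b'R'[(b'⊗I_k)Σ(b⊗I_k)]⁻¹Rb` (over `b = (1,−β)'`). -/
theorem LR_moment_representation (k : ℕ) (hk : 1 ≤ k) (β₀ : ℝ)
    (R : Matrix (Fin k) (Fin 2) ℝ)
    (Sig ShInv : Matrix (Fin 2 × Fin k) (Fin 2 × Fin k) ℝ)
    (hSig : Sig.PosDef) (hShSym : ShInv.IsSymm) (hShInv : ShInv * ShInv = Sig⁻¹)
    (Dhalf : Matrix (Fin k) (Fin k) ℝ) (hDsym : Dhalf.IsSymm)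
    (hD : Dhalf * Dhalf = (rowKron k ![β₀, 1] * Sig⁻¹ * (rowKron k ![β₀, 1])ᵀ)⁻¹)
    (T : Fin k → ℝ)
    (hT : T = Dhalf *ᵥ ((rowKron k ![β₀, 1] * Sig⁻¹) *ᵥ vecCol R)) :
    (⨆ β : ℝ, (ShInv *ᵥ vecCol R) ⬝ᵥ
        (projMat (ShInv * colKron k ![β, 1]) *ᵥ (ShInv *ᵥ vecCol R))) - T ⬝ᵥ T
      = (rowKron k ![1, -β₀] *ᵥ vecCol R) ⬝ᵥ
          ((rowKron k ![1, -β₀] * Sig * (rowKron k ![1, -β₀])ᵀ)⁻¹ *ᵥ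
            (rowKron k ![1, -β₀] *ᵥ vecCol R))
        - ⨅ β : ℝ, (rowKron k ![1, -β] *ᵥ vecCol R) ⬝ᵥ
            ((rowKron k ![1, -β] * Sig * (rowKron k ![1, -β])ᵀ)⁻¹ *ᵥ
              (rowKron k ![1, -β] *ᵥ vecCol R)) := by
  classical
  have hSiT : (Sig⁻¹)ᵀ = Sig⁻¹ := LRaux.transpose_eq hSig.inv.isHermitian
  set r : Fin 2 × Fin k → ℝ := vecCol R with hrdef
  -- the G function (statement form)
  set G : ℝ → ℝ := fun β => (rowKron k ![1, -β] *ᵥ r) ⬝ᵥ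
      ((rowKron k ![1, -β] * Sig * (rowKron k ![1, -β])ᵀ)⁻¹ *ᵥ
        (rowKron k ![1, -β] *ᵥ r)) with hGdef
  set C : ℝ := r ⬝ᵥ (Sig⁻¹ *ᵥ r) with hCdef
  -- G in quadratic-in-r form
  have hg : ∀ β : ℝ, G β = r ⬝ᵥ ((colKron k ![1,-β]
      * ((colKron k ![1,-β])ᵀ * Sig * colKron k ![1,-β])⁻¹ * (colKron k ![1,-β])ᵀ) *ᵥ r) := by
    intro β
    rw [hGdef]
    simp only
    rw [LRaux.rowKron_eq, Matrix.transpose_transpose]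
    exact LRaux.quad_helper (colKron k ![1,-β]) _ r
  -- pointwise identity: quadratic form of P equals C - G β
  have hPC : ∀ β : ℝ, r ⬝ᵥ ((Sig⁻¹ * colKron k ![β,1]
      * ((colKron k ![β,1])ᵀ * Sig⁻¹ * colKron k ![β,1])⁻¹
      * ((colKron k ![β,1])ᵀ * Sig⁻¹)) *ᵥ r) = C - G β := by
    intro β
    have h := LRaux.star_spec (k := k) β hSig
    have h2 := eq_sub_of_add_eq h.symm
    rw [h2, Matrix.sub_mulVec, dotProduct_sub, ← hCdef, ← hg β]
  -- the sup body equals C - G β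
  have hf : ∀ β : ℝ, (ShInv *ᵥ r) ⬝ᵥ
      (projMat (ShInv * colKron k ![β, 1]) *ᵥ (ShInv *ᵥ r)) = C - G β := by
    intro β
    set A := colKron k ![β,1] with hAdef
    have h1 : (ShInv * A)ᵀ = Aᵀ * ShInv := by rw [Matrix.transpose_mul, hShSym.eq]
    have h2 : (ShInv * A)ᵀ * (ShInv * A) = Aᵀ * Sig⁻¹ * A := by
      rw [h1, Matrix.mul_assoc Aᵀ ShInv (ShInv * A), ← Matrix.mul_assoc ShInv ShInv A, hShInv,
        ← Matrix.mul_assoc]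
    have hq := LRaux.quad_helper ShInv (projMat (ShInv * A)) r
    rw [hShSym.eq] at hq
    rw [hq, ← hPC β]
    congr 2
    rw [projMat, h2, h1]
    simp only [Matrix.mul_assoc]
    rw [hShInv, ← Matrix.mul_assoc ShInv ShInv, hShInv]
  -- T'T equals C - G β₀
  have hTT : T ⬝ᵥ T = C - G β₀ := by
    have hrow : rowKron k ![β₀,1] = (colKron k ![β₀,1])ᵀ := LRaux.rowKron_eq _
    rw [hrow, Matrix.transpose_transpose] at hD
    rw [hT, hrow]
    have e1 : ∀ u : Fin k → ℝ, (Dhalf *ᵥ u) ⬝ᵥ (Dhalf *ᵥ u)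
        = u ⬝ᵥ ((Dhalf * Dhalf) *ᵥ u) := by
      intro u
      have hq := LRaux.quad_helper Dhalf 1 u
      rw [hDsym.eq] at hq
      simpa using hq
    rw [e1, hD]
    have hq2 := LRaux.quad_helper (Sig⁻¹ * colKron k ![β₀,1])
      (((colKron k ![β₀,1])ᵀ * Sig⁻¹ * colKron k ![β₀,1])⁻¹) r
    rw [Matrix.transpose_mul, hSiT] at hq2
    rw [hq2, hPC β₀]
  -- assemble
  calc (⨆ β : ℝ, (ShInv *ᵥ r) ⬝ᵥ
        (projMat (ShInv * colKron k ![β, 1]) *ᵥ (ShInv *ᵥ r))) - T ⬝ᵥ T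
      = (⨆ β : ℝ, C - G β) - (C - G β₀) := by rw [iSup_congr hf, hTT]
    _ = G β₀ - ⨅ β : ℝ, G β := by
        apply LRaux.sup_sub
        intro β
        rw [hg β, ← LRaux.quad_helper]
        exact LRaux.quad_nonneg (LRaux.BSB_posdef β hSig).inv _
    _ = _ := by rw [hGdef]
end
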